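/- For every θ with 0 < θ < π and every x ∈ ℝ, the function f_θ satisfies the functional equation f_θ(x) + f_θ(−x) = π − θ. -/
import Mathlib

open Complex Real

noncomputable def f (θ x : ℝ) : ℝ := -(1 - Complex.exp (x + θ * Complex.I)).arg

lemma im_aux (θ x : ℝ) (hθ0 : 0 < θ) (hθπ : θ < Real.pi) :
    0 < (1 - Complex.exp (x - θ * Complex.I)).im := by
  have hs : 0 < Real.sin θ := Real.sin_pos_of_pos_of_lt_pi hθ0 hθπ
  have : (1 - Complex.exp (x - θ * Complex.I)).im = Real.exp x * Real.sin θ := by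
    simp [Complex.exp_im, Complex.sub_im, Complex.sub_re, Complex.mul_im, Complex.mul_re]
  rw [this]
  positivity

lemma arg_bounds (z : ℂ) (h : 0 < z.im) : 0 < z.arg ∧ z.arg < Real.pi := by
  constructor
  · exact lt_of_le_of_ne (Complex.arg_nonneg_iff.2 h.le)
      (fun he => h.ne' (Complex.arg_eq_zero_iff.mp he.symm).2)
  · exact lt_of_le_of_ne (Complex.arg_le_pi z)
      (fun he => h.ne' (Complex.arg_eq_pi_iff.mp he).2)

lemma f_eq_arg (θ x : ℝ) (hθ0 : 0 < θ) (hθπ : θ < Real.pi) :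
    f θ x = (1 - Complex.exp (x - θ * Complex.I)).arg := by
  have hc : (starRingEnd ℂ) ((x : ℂ) + θ * Complex.I) = x - θ * Complex.I := by
    simp [Complex.ext_iff]
  have hconj : (starRingEnd ℂ) (1 - Complex.exp (x + θ * Complex.I)) =
      1 - Complex.exp (x - θ * Complex.I) := by
    rw [map_sub, map_one, ← Complex.exp_conj, hc]
  have him : 0 < (1 - Complex.exp (x - θ * Complex.I)).im := im_aux θ x hθ0 hθπ
  have hne : (1 - Complex.exp (x + θ * Complex.I)).arg ≠ Real.pi := by
    intro h
    rw [Complex.arg_eq_pi_iff] at h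
    have h2 : (1 - Complex.exp (x - θ * Complex.I)).im =
        -((1 - Complex.exp (x + θ * Complex.I)).im) := by
      rw [← hconj]; simp
    rw [h.2] at h2
    simp at h2
    simp [Complex.sub_im, h2] at him
  have harg := Complex.arg_conj (1 - Complex.exp (x + θ * Complex.I))
  rw [if_neg hne, hconj] at harg
  unfold f
  linarith [harg]

theorem fTheta_functional_equation (θ : ℝ) (hθ0 : 0 < θ) (hθπ : θ < Real.pi) (x : ℝ) :
    f θ x + f θ (-x) = Real.pi - θ := by
  have hpi := Real.pi_pos
  set u := 1 - Complex.exp ((x : ℂ) - θ * Complex.I) with hu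
  set v := 1 - Complex.exp (((-x : ℝ) : ℂ) - θ * Complex.I) with hv
  have hiu : 0 < u.im := im_aux θ x hθ0 hθπ
  have hiv : 0 < v.im := im_aux θ (-x) hθ0 hθπ
  have hune : u ≠ 0 := fun h => by simp [h] at hiu
  have hvne : v ≠ 0 := fun h => by simp [h] at hiv
  obtain ⟨hau0, hauπ⟩ := arg_bounds u hiu
  obtain ⟨hav0, havπ⟩ := arg_bounds v hiv
  -- positivity of r
  have hr : 0 < Real.exp x + Real.exp (-x) - 2 * Real.cos θ := by
    have h1 : Real.exp x * Real.exp (-x) = 1 := by rw [← Real.exp_add]; simp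
    have hs : 0 < Real.sin θ := Real.sin_pos_of_pos_of_lt_pi hθ0 hθπ
    have hc : Real.cos θ < 1 := by
      nlinarith [Real.sin_sq_add_cos_sq θ, Real.neg_one_le_cos θ]
    nlinarith [Real.exp_pos x, Real.exp_pos (-x), sq_nonneg (Real.exp x - Real.exp (-x))]
  set r : ℝ := Real.exp x + Real.exp (-x) - 2 * Real.cos θ with hrdef
  -- product identity
  set A : ℂ := Complex.exp (x : ℂ) with hA
  set A' : ℂ := Complex.exp ((-x : ℝ) : ℂ) with hA'
  set E : ℂ := Complex.exp (-(θ : ℂ) * Complex.I) with hE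
  set F : ℂ := Complex.exp ((θ : ℂ) * Complex.I) with hF
  have hAA' : A * A' = 1 := by rw [hA, hA', ← Complex.exp_add]; push_cast; simp
  have hEF : E * F = 1 := by rw [hE, hF, ← Complex.exp_add]; ring_nf; simp
  have hrc : (r : ℂ) = A + A' - (E + F) := by
    have hcos : (Complex.cos θ : ℂ) = (F + E) / 2 := by
      rw [Complex.cos, hE, hF]
    rw [hrdef]
    push_cast [Complex.ofReal_exp, Complex.ofReal_cos]
    rw [hA, hA', hcos]
    push_cast
    ring
  have huA : u = 1 - A * E := by
    rw [hu, hA, hE, ← Complex.exp_add]; ring_nf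
  have hvA : v = 1 - A' * E := by
    rw [hv, hA', hE, ← Complex.exp_add]; ring_nf
  have hexp : Complex.exp (((Real.pi - θ : ℝ) : ℂ) * Complex.I) = -E := by
    push_cast
    rw [sub_mul, Complex.exp_sub, Complex.exp_pi_mul_I, hE]
    rw [show -(θ:ℂ) * Complex.I = -((θ:ℂ) * Complex.I) by ring, Complex.exp_neg]
    field_simp
  have hprod : u * v = (r : ℂ) * Complex.exp (((Real.pi - θ : ℝ) : ℂ) * Complex.I) := by
    rw [huA, hvA, hexp]
    linear_combination (E^2) * hAA' - hEF + E * hrc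
  have hargprod : (u * v).arg = Real.pi - θ := by
    rw [hprod, Complex.exp_mul_I, Complex.arg_real_mul _ hr]
    exact Complex.arg_cos_add_sin_mul_I ⟨by linarith, by linarith⟩
  have hangle := Complex.arg_mul_coe_angle hune hvne
  rw [hargprod, ← Real.Angle.coe_add] at hangle
  rw [Real.Angle.angle_eq_iff_two_pi_dvd_sub] at hangle
  obtain ⟨k, hk⟩ := hangle
  have hk0 : k = 0 := by
    have h1 : (k : ℝ) < 1 := by nlinarith
    have h2 : (-1 : ℝ) < (k : ℝ) := by nlinarith
    have h1' : k < 1 := by exact_mod_cast h1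
    have h2' : (-1 : ℤ) < k := by exact_mod_cast h2
    omega
  rw [hk0] at hk
  rw [f_eq_arg θ x hθ0 hθπ, f_eq_arg θ (-x) hθ0 hθπ, ← hu, ← hv]
  push_cast at hk
  linarith [hk]
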